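/- Let F̆ ∈ M̆ with mean m̆ := ∫₀¹ F̆(u)du and standard deviation s̆ := ‖F̆ − m̆‖_{L²} > 0, and let ε > 0. Then the set of values ‖g − ∫₀¹g(u)du‖_{L²} attained as g ranges over M̆_ε is exactly the interval [max{s̆ − ε, 0}, s̆ + ε]; in particular the supremum s̆ + ε and the infimum max{s̆ − ε, 0} are both attained by elements of M̆_ε. -/

import Mathlib

open MeasureTheory Set

noncomputable section

/-- Lebesgue measure restricted to `[0,1]`. -/
def μ01 : Measure ℝ := volume.restrict (Icc (0:ℝ) 1)

instance : IsFiniteMeasure μ01 := by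
  constructor
  simp [μ01, Real.volume_Icc]

instance : IsProbabilityMeasure μ01 := by
  constructor
  simp [μ01, Real.volume_Icc]

lemma integrable_of_L2 (h : Lp ℝ 2 μ01) : Integrable (h : ℝ → ℝ) μ01 :=
  (Lp.memLp h).integrable (by norm_num)

lemma integral_Lpconst (c : ℝ) : ∫ u, (Lp.const 2 μ01 c : Lp ℝ 2 μ01) u ∂μ01 = c := by
  rw [integral_congr_ae (Lp.coeFn_const _ _ _)]
  simp

lemma integral_sub' (f g : Lp ℝ 2 μ01) :
    ∫ u, (f - g : Lp ℝ 2 μ01) u ∂μ01 = (∫ u, f u ∂μ01) - ∫ u, g u ∂μ01 := by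
  rw [integral_congr_ae (Lp.coeFn_sub f g)]
  exact integral_sub (integrable_of_L2 f) (integrable_of_L2 g)

lemma integral_add' (f g : Lp ℝ 2 μ01) :
    ∫ u, (f + g : Lp ℝ 2 μ01) u ∂μ01 = (∫ u, f u ∂μ01) + ∫ u, g u ∂μ01 := by
  rw [integral_congr_ae (Lp.coeFn_add f g)]
  exact integral_add (integrable_of_L2 f) (integrable_of_L2 g)

lemma integral_smul' (t : ℝ) (f : Lp ℝ 2 μ01) :
    ∫ u, (t • f : Lp ℝ 2 μ01) u ∂μ01 = t * ∫ u, f u ∂μ01 := by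
  rw [integral_congr_ae (Lp.coeFn_smul t f)]
  exact integral_const_mul t _

lemma inner_const' (f : Lp ℝ 2 μ01) (c : ℝ) :
    (inner ℝ f (Lp.const 2 μ01 c) : ℝ) = c * ∫ u, f u ∂μ01 := by
  have h1 : (fun a => (inner ℝ (f a) ((Lp.const 2 μ01 c : Lp ℝ 2 μ01) a) : ℝ))
      =ᵐ[μ01] fun a => c * f a :=
    (Lp.coeFn_const 2 μ01 c).mono fun x hx => by
      simp [hx, RCLike.inner_apply, mul_comm]
  rw [MeasureTheory.L2.inner_def, integral_congr_ae h1, integral_const_mul]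

lemma norm_sub_mean_le (h : Lp ℝ 2 μ01) :
    ‖h - Lp.const 2 μ01 (∫ u, h u ∂μ01)‖ ≤ ‖h‖ := by
  set c := ∫ u, h u ∂μ01 with hc
  set P : Lp ℝ 2 μ01 := h - Lp.const 2 μ01 c with hP
  have hcross : (inner ℝ P (Lp.const 2 μ01 c) : ℝ) = 0 := by
    rw [inner_const', hP, integral_sub', integral_Lpconst, ← hc]
    ring
  have hdecomp : h = P + Lp.const 2 μ01 c := by rw [hP]; abel
  have hsq : ‖h‖ ^ 2 = ‖P‖ ^ 2 + ‖Lp.const 2 μ01 c‖ ^ 2 := by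
    rw [hdecomp, norm_add_sq_real, hcross]; ring
  nlinarith [norm_nonneg h, norm_nonneg P, norm_nonneg (Lp.const 2 μ01 c : Lp ℝ 2 μ01), sq_nonneg (‖P‖ - ‖h‖)]

/-- The set `M̆` of elements of `L²([0,1])` admitting a nondecreasing representative. -/
def Mqf : Set (Lp ℝ 2 μ01) :=
  {g | ∃ g₀ : ℝ → ℝ, MonotoneOn g₀ (Icc (0:ℝ) 1) ∧ (g : ℝ → ℝ) =ᵐ[μ01] g₀}

/-- The `ε`-Wasserstein ball of quantile functions around `F`. -/
def Mball (F : Lp ℝ 2 μ01) (ε : ℝ) : Set (Lp ℝ 2 μ01) :=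
  {g ∈ Mqf | ‖g - F‖ ≤ ε}
theorem stmt3 (F : Lp ℝ 2 μ01) (hF : F ∈ Mqf) (ε : ℝ) (hε : 0 < ε)
    (mF s : ℝ) (hmF : mF = ∫ u, F u ∂μ01)
    (hs : s = ‖F - Lp.const 2 μ01 mF‖) (hs0 : 0 < s) :
    (fun g : Lp ℝ 2 μ01 => ‖g - Lp.const 2 μ01 (∫ u, g u ∂μ01)‖) '' Mball F ε
      = Icc (max (s - ε) 0) (s + ε) ∧
    (s + ε) ∈ (fun g : Lp ℝ 2 μ01 => ‖g - Lp.const 2 μ01 (∫ u, g u ∂μ01)‖) '' Mball F ε ∧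
    max (s - ε) 0 ∈ (fun g : Lp ℝ 2 μ01 => ‖g - Lp.const 2 μ01 (∫ u, g u ∂μ01)‖) '' Mball F ε := by
  set D : Lp ℝ 2 μ01 := F - Lp.const 2 μ01 mF with hD
  have hDnorm : ‖D‖ = s := hs.symm
  have hDint : ∫ u, D u ∂μ01 = 0 := by
    rw [hD, integral_sub', integral_Lpconst, ← hmF, sub_self]
  have key : (fun g : Lp ℝ 2 μ01 => ‖g - Lp.const 2 μ01 (∫ u, g u ∂μ01)‖) '' Mball F ε
      = Icc (max (s - ε) 0) (s + ε) := by
    ext v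
    constructor
    · rintro ⟨g, ⟨hgM, hgd⟩, rfl⟩
      have hkey : (g - Lp.const 2 μ01 (∫ u, g u ∂μ01)) - D
          = (g - F) - Lp.const 2 μ01 (∫ u, (g - F : Lp ℝ 2 μ01) u ∂μ01) := by
        rw [integral_sub', ← hmF, map_sub (Lp.const 2 μ01), hD]
        abel
      have h1 : ‖(g - Lp.const 2 μ01 (∫ u, g u ∂μ01)) - D‖ ≤ ε :=
        hkey ▸ (norm_sub_mean_le (g - F)).trans hgd
      have h2 := abs_norm_sub_norm_le (g - Lp.const 2 μ01 (∫ u, g u ∂μ01)) D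
      rw [hDnorm] at h2
      have h3 := abs_le.mp (h2.trans h1)
      exact ⟨max_le (by linarith [h3.1]) (norm_nonneg _), by linarith [h3.2]⟩
    · rintro ⟨hv1, hv2⟩
      have hv0 : 0 ≤ v := le_trans (le_max_right _ _) hv1
      have hvs : s - ε ≤ v := le_trans (le_max_left _ _) hv1
      set t : ℝ := v / s with htdef
      have ht0 : 0 ≤ t := div_nonneg hv0 hs0.le
      have hts : t * s = v := div_mul_cancel₀ v hs0.ne'
      set G : Lp ℝ 2 μ01 := Lp.const 2 μ01 mF + t • D with hG
      have hGint : ∫ u, G u ∂μ01 = mF := by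
        rw [hG, integral_add', integral_smul', integral_Lpconst, hDint]
        ring
      have hGsub : G - Lp.const 2 μ01 (∫ u, G u ∂μ01) = t • D := by
        rw [hGint, hG, add_sub_cancel_left]
      have hval : ‖G - Lp.const 2 μ01 (∫ u, G u ∂μ01)‖ = v := by
        rw [hGsub, norm_smul, Real.norm_eq_abs, abs_of_nonneg ht0, hDnorm, hts]
      have hGF : G - F = (t - 1) • D := by
        rw [sub_smul, one_smul, hG, hD]
        abel
      have hdist : ‖G - F‖ ≤ ε := by
        rw [hGF, norm_smul, Real.norm_eq_abs, hDnorm, ← abs_of_nonneg hs0.le, ← abs_mul]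
        rw [sub_mul, one_mul, hts, abs_le]
        constructor <;> linarith
      obtain ⟨F₀, hm, hae⟩ := hF
      refine ⟨G, ⟨⟨fun x => mF + t * (F₀ x - mF), ?_, ?_⟩, hdist⟩, hval⟩
      · intro x hx y hy hxy
        have h := hm hx hy hxy
        have := mul_le_mul_of_nonneg_left (sub_le_sub_right h mF) ht0
        simpa using this
      · filter_upwards [Lp.coeFn_add (Lp.const 2 μ01 mF) (t • D), Lp.coeFn_smul t D,
          Lp.coeFn_sub F (Lp.const 2 μ01 mF), Lp.coeFn_const 2 μ01 mF, hae]
          with x h1 h2 h3 h4 h5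
        show G x = mF + t * (F₀ x - mF)
        rw [hG]
        simp only [h1, Pi.add_apply, h2, Pi.smul_apply, h4, Function.const_apply]
        have hDx : (D : ℝ → ℝ) x = F x - mF := by
          have h3' : (D : ℝ → ℝ) x
              = ((F : ℝ → ℝ) - ((Lp.const 2 μ01 mF : Lp ℝ 2 μ01) : ℝ → ℝ)) x := h3
          simpa [h4] using h3'
        rw [hDx, h5]
        simp
  refine ⟨key, ?_, ?_⟩
  · rw [key]
    exact ⟨max_le (by linarith) (by linarith), le_refl _⟩
  · rw [key]
    exact ⟨le_refl _, max_le (by linarith) (by linarith)⟩
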